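/- Let n, m, k ∈ ℕ with 1 < k < n, m·k ≤ n, and k - (k mod 2) ≥ 2√n (equivalently, (k - k mod 2)² ≥ 4n). Then there exists an (n,m,k)-assignment mechanism that is impartial and α-optimal with α = (k - k mod 2) / (2k · ⌈2n / (k - k mod 2)⌉). -/

import Mathlib

open Finset

/-- A valid weight matrix: nonnegative entries and zero diagonal. -/
def IsValidMatrix {n : ℕ} (A : Matrix (Fin n) (Fin n) ℝ) : Prop :=
  (∀ i j, 0 ≤ A i j) ∧ ∀ i, A i i = 0

/-- Score of a subset `S` of agents under weight matrix `A`. -/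
def score {n : ℕ} (A : Matrix (Fin n) (Fin n) ℝ) (S : Finset (Fin n)) : ℝ :=
  ∑ i : Fin n, ∑ j ∈ S, A i j

/-- A feasible assignment: `m` pairwise disjoint sets of agents, each of
cardinality at most `k`. -/
def FeasibleAssignment {n : ℕ} (m k : ℕ) (X : Fin m → Finset (Fin n)) : Prop :=
  (∀ ℓ, (X ℓ).card ≤ k) ∧ ∀ ℓ ℓ', ℓ ≠ ℓ' → Disjoint (X ℓ) (X ℓ')

/-- Total score of an assignment: the sum over the jobs of the score of the set
assigned to each job. -/
def totalScore {n m : ℕ} (A : Fin m → Matrix (Fin n) (Fin n) ℝ)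
    (X : Fin m → Finset (Fin n)) : ℝ :=
  ∑ ℓ, score (A ℓ) (X ℓ)

/-- The maximum total score over all feasible assignments with capacity `k`. -/
noncomputable def optAssign {n : ℕ} (m k : ℕ)
    (A : Fin m → Matrix (Fin n) (Fin n) ℝ) : ℝ :=
  sSup {x : ℝ | ∃ X : Fin m → Finset (Fin n),
    FeasibleAssignment m k X ∧ totalScore A X = x}

/-- Impartiality of an `(n,m,k)`-assignment mechanism. -/
def ImpartialAssign {n m : ℕ}
    (f : (Fin m → Matrix (Fin n) (Fin n) ℝ) → (Fin m → Finset (Fin n))) : Prop :=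
  ∀ A A' : Fin m → Matrix (Fin n) (Fin n) ℝ,
    (∀ ℓ, IsValidMatrix (A ℓ)) → (∀ ℓ, IsValidMatrix (A' ℓ)) →
    ∀ i : Fin n, (∀ ℓ, ∀ i', i' ≠ i → A ℓ i' = A' ℓ i') →
      ∀ ℓ, (i ∈ f A ℓ ↔ i ∈ f A' ℓ)

/-- `α`-optimality of an `(n,m,k)`-assignment mechanism. -/
def AlphaOptimalAssign {n m : ℕ} (k : ℕ)
    (f : (Fin m → Matrix (Fin n) (Fin n) ℝ) → (Fin m → Finset (Fin n)))
    (α : ℝ) : Prop :=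
  ∀ A : Fin m → Matrix (Fin n) (Fin n) ℝ, (∀ ℓ, IsValidMatrix (A ℓ)) →
    α * optAssign m k A ≤ totalScore A (f A)


namespace Stmt14X

/-- Column sum of a matrix. -/
def colsum {n : ℕ} (B : Matrix (Fin n) (Fin n) ℝ) (j : Fin n) : ℝ := ∑ i, B i j

/-- Votes into `j` from rows outside `j`'s residue class mod `K`. -/
def phi (K : ℕ) {n : ℕ} (B : Matrix (Fin n) (Fin n) ℝ) (j : Fin n) : ℝ :=
  ∑ i ∈ univ.filter (fun i : Fin n => (i : ℕ) % K ≠ (j : ℕ) % K), B i j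

/-- Votes into `j` from rows outside `j`'s block of consecutive `R` indices. -/
def psi (R : ℕ) {n : ℕ} (B : Matrix (Fin n) (Fin n) ℝ) (j : Fin n) : ℝ :=
  ∑ i ∈ univ.filter (fun i : Fin n => (i : ℕ) / R ≠ (j : ℕ) / R), B i j

/-- An argmax over `Finset.range R`. -/
noncomputable def bestShift (R : ℕ) (v : ℕ → ℝ) : ℕ :=
  if h : (Finset.range R).Nonempty then (Finset.exists_max_image (Finset.range R) v h).choose
  else 0

lemma bestShift_spec (R : ℕ) (v : ℕ → ℝ) (hR : 0 < R) :
    ∀ t ∈ Finset.range R, v t ≤ v (bestShift R v) := by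
  have h : (Finset.range R).Nonempty := by
    rw [Finset.nonempty_range_iff]; omega
  rw [bestShift, dif_pos h]
  have := (Finset.exists_max_image (Finset.range R) v h).choose_spec
  exact this.2

def Pval (K R : ℕ) {n m : ℕ} (A : Fin m → Matrix (Fin n) (Fin n) ℝ) (u t : ℕ) : ℝ :=
  ∑ ℓ : Fin m, ∑ j ∈ univ.filter
    (fun j : Fin n => (j : ℕ) % K = u ∧ (j : ℕ) / K = ((ℓ : ℕ) + t) % R), phi K (A ℓ) j

def Qval (K R : ℕ) {n m : ℕ} (A : Fin m → Matrix (Fin n) (Fin n) ℝ) (v t : ℕ) : ℝ :=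
  ∑ ℓ : Fin m, ∑ j ∈ univ.filter
    (fun j : Fin n => (j : ℕ) / R = v ∧ (j : ℕ) % R = ((ℓ : ℕ) + t) % R), psi R (A ℓ) j

noncomputable def tP (K R : ℕ) {n m : ℕ} (A : Fin m → Matrix (Fin n) (Fin n) ℝ) (u : ℕ) : ℕ :=
  bestShift R (Pval K R A u)

noncomputable def tQ (K R : ℕ) {n m : ℕ} (A : Fin m → Matrix (Fin n) (Fin n) ℝ) (v : ℕ) : ℕ :=
  bestShift R (Qval K R A v)

def PJob (K R : ℕ) {n m : ℕ} (A : Fin m → Matrix (Fin n) (Fin n) ℝ) (j : Fin n) (ℓ : Fin m) :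
    Prop :=
  ((ℓ : ℕ) + tP K R A ((j : ℕ) % K)) % R = (j : ℕ) / K

def QJob (K R : ℕ) {n m : ℕ} (A : Fin m → Matrix (Fin n) (Fin n) ℝ) (j : Fin n) (ℓ : Fin m) :
    Prop :=
  ((ℓ : ℕ) + tQ K R A ((j : ℕ) / R)) % R = (j : ℕ) % R

noncomputable instance {K R : ℕ} {n m : ℕ} {A : Fin m → Matrix (Fin n) (Fin n) ℝ} {j : Fin n} {ℓ : Fin m} :
    Decidable (PJob K R A j ℓ) := by unfold PJob; infer_instance

noncomputable instance {K R : ℕ} {n m : ℕ} {A : Fin m → Matrix (Fin n) (Fin n) ℝ} {j : Fin n} {ℓ : Fin m} :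
    Decidable (QJob K R A j ℓ) := by unfold QJob; infer_instance

noncomputable def pickP (K R : ℕ) {n m : ℕ} (A : Fin m → Matrix (Fin n) (Fin n) ℝ) (j : Fin n) :
    Option (Fin m) :=
  if h : (univ.filter fun ℓ : Fin m => PJob K R A j ℓ).Nonempty
  then some ((univ.filter fun ℓ : Fin m => PJob K R A j ℓ).min' h) else none

noncomputable def pickQ (K R : ℕ) {n m : ℕ} (A : Fin m → Matrix (Fin n) (Fin n) ℝ) (j : Fin n) :
    Option (Fin m) :=
  if h : (univ.filter fun ℓ : Fin m => QJob K R A j ℓ).Nonempty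
  then some ((univ.filter fun ℓ : Fin m => QJob K R A j ℓ).min' h) else none

open scoped Classical in
noncomputable def chosen (K R : ℕ) {n m : ℕ} (A : Fin m → Matrix (Fin n) (Fin n) ℝ) (j : Fin n) :
    Option (Fin m) :=
  (pickP K R A j).elim (pickQ K R A j) (fun a =>
    (pickQ K R A j).elim (some a) (fun b =>
      if psi R (A b) j ≤ phi K (A a) j then some a else some b))

noncomputable def creditP (K R : ℕ) {n m : ℕ} (A : Fin m → Matrix (Fin n) (Fin n) ℝ)
    (j : Fin n) : ℝ :=
  (pickP K R A j).elim 0 (fun a => phi K (A a) j)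

noncomputable def creditQ (K R : ℕ) {n m : ℕ} (A : Fin m → Matrix (Fin n) (Fin n) ℝ)
    (j : Fin n) : ℝ :=
  (pickQ K R A j).elim 0 (fun b => psi R (A b) j)

noncomputable def captured (K R : ℕ) {n m : ℕ} (A : Fin m → Matrix (Fin n) (Fin n) ℝ)
    (j : Fin n) : ℝ :=
  (chosen K R A j).elim 0 (fun a => colsum (A a) j)

open scoped Classical in
noncomputable def mech (K R : ℕ) {n m : ℕ} (A : Fin m → Matrix (Fin n) (Fin n) ℝ)
    (ℓ : Fin m) : Finset (Fin n) :=
  univ.filter (fun j => chosen K R A j = some ℓ)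

end Stmt14X

namespace Stmt14X

variable {n m : ℕ}

lemma pickP_spec {K R : ℕ} {A : Fin m → Matrix (Fin n) (Fin n) ℝ} {j : Fin n} {a : Fin m}
    (h : pickP K R A j = some a) : PJob K R A j a := by
  rw [pickP] at h
  split at h
  · rename_i hne
    have hm := Finset.min'_mem _ hne
    rw [Option.some_inj] at h
    rw [h] at hm
    exact (Finset.mem_filter.1 hm).2
  · exact absurd h (by simp)

lemma pickQ_spec {K R : ℕ} {A : Fin m → Matrix (Fin n) (Fin n) ℝ} {j : Fin n} {a : Fin m}
    (h : pickQ K R A j = some a) : QJob K R A j a := by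
  rw [pickQ] at h
  split at h
  · rename_i hne
    have hm := Finset.min'_mem _ hne
    rw [Option.some_inj] at h
    rw [h] at hm
    exact (Finset.mem_filter.1 hm).2
  · exact absurd h (by simp)

lemma pjob_unique {K R : ℕ} {A : Fin m → Matrix (Fin n) (Fin n) ℝ} {j : Fin n}
    (hmR : m ≤ R) {ℓ ℓ' : Fin m} (h : PJob K R A j ℓ) (h' : PJob K R A j ℓ') : ℓ = ℓ' := by
  rw [PJob] at h h'
  have hmod : ((ℓ : ℕ) + tP K R A ((j : ℕ) % K)) % R
      = ((ℓ' : ℕ) + tP K R A ((j : ℕ) % K)) % R := h.trans h'.symm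
  have h2 : (ℓ : ℕ) ≡ (ℓ' : ℕ) [MOD R] := Nat.ModEq.add_right_cancel' _ hmod
  have l1 : (ℓ : ℕ) < R := lt_of_lt_of_le ℓ.isLt hmR
  have l2 : (ℓ' : ℕ) < R := lt_of_lt_of_le ℓ'.isLt hmR
  have : (ℓ : ℕ) = (ℓ' : ℕ) := by
    have := h2
    rw [Nat.ModEq, Nat.mod_eq_of_lt l1, Nat.mod_eq_of_lt l2] at this
    exact this
  exact Fin.ext this

lemma qjob_unique {K R : ℕ} {A : Fin m → Matrix (Fin n) (Fin n) ℝ} {j : Fin n}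
    (hmR : m ≤ R) {ℓ ℓ' : Fin m} (h : QJob K R A j ℓ) (h' : QJob K R A j ℓ') : ℓ = ℓ' := by
  rw [QJob] at h h'
  have hmod : ((ℓ : ℕ) + tQ K R A ((j : ℕ) / R)) % R
      = ((ℓ' : ℕ) + tQ K R A ((j : ℕ) / R)) % R := h.trans h'.symm
  have h2 : (ℓ : ℕ) ≡ (ℓ' : ℕ) [MOD R] := Nat.ModEq.add_right_cancel' _ hmod
  have l1 : (ℓ : ℕ) < R := lt_of_lt_of_le ℓ.isLt hmR
  have l2 : (ℓ' : ℕ) < R := lt_of_lt_of_le ℓ'.isLt hmR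
  have : (ℓ : ℕ) = (ℓ' : ℕ) := by
    have := h2
    rw [Nat.ModEq, Nat.mod_eq_of_lt l1, Nat.mod_eq_of_lt l2] at this
    exact this
  exact Fin.ext this

lemma pickP_eq_some {K R : ℕ} {A : Fin m → Matrix (Fin n) (Fin n) ℝ} {j : Fin n}
    (hmR : m ≤ R) {a : Fin m} (h : PJob K R A j a) : pickP K R A j = some a := by
  have hne : (univ.filter fun ℓ : Fin m => PJob K R A j ℓ).Nonempty :=
    ⟨a, Finset.mem_filter.2 ⟨Finset.mem_univ _, h⟩⟩
  rw [pickP, dif_pos hne]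
  congr 1
  exact pjob_unique hmR (pickP_spec (by rw [pickP, dif_pos hne])) h

lemma pickQ_eq_some {K R : ℕ} {A : Fin m → Matrix (Fin n) (Fin n) ℝ} {j : Fin n}
    (hmR : m ≤ R) {a : Fin m} (h : QJob K R A j a) : pickQ K R A j = some a := by
  have hne : (univ.filter fun ℓ : Fin m => QJob K R A j ℓ).Nonempty :=
    ⟨a, Finset.mem_filter.2 ⟨Finset.mem_univ _, h⟩⟩
  rw [pickQ, dif_pos hne]
  congr 1
  exact qjob_unique hmR (pickQ_spec (by rw [pickQ, dif_pos hne])) h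

lemma chosen_cases {K R : ℕ} {A : Fin m → Matrix (Fin n) (Fin n) ℝ} {j : Fin n} {ℓ : Fin m}
    (h : chosen K R A j = some ℓ) : PJob K R A j ℓ ∨ QJob K R A j ℓ := by
  rw [chosen] at h
  rcases hP : pickP K R A j with _ | a <;> rcases hQ : pickQ K R A j with _ | b <;>
    rw [hP, hQ] at h <;> simp only [Option.elim_none, Option.elim_some] at h
  · exact absurd h (by simp)
  · rw [Option.some_inj] at h; subst h; exact Or.inr (pickQ_spec hQ)
  · rw [Option.some_inj] at h; subst h; exact Or.inl (pickP_spec hP)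
  · split at h <;> rw [Option.some_inj] at h <;> subst h
    · exact Or.inl (pickP_spec hP)
    · exact Or.inr (pickQ_spec hQ)

end Stmt14X

namespace Stmt14X

variable {n m : ℕ}

lemma colsum_nonneg {B : Matrix (Fin n) (Fin n) ℝ} (hB : ∀ i j, 0 ≤ B i j) (j : Fin n) :
    0 ≤ colsum B j :=
  Finset.sum_nonneg fun i _ => hB i j

lemma phi_nonneg {K : ℕ} {B : Matrix (Fin n) (Fin n) ℝ} (hB : ∀ i j, 0 ≤ B i j) (j : Fin n) :
    0 ≤ phi K B j :=
  Finset.sum_nonneg fun i _ => hB i j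

lemma psi_nonneg {R : ℕ} {B : Matrix (Fin n) (Fin n) ℝ} (hB : ∀ i j, 0 ≤ B i j) (j : Fin n) :
    0 ≤ psi R B j :=
  Finset.sum_nonneg fun i _ => hB i j

lemma phi_le_colsum {K : ℕ} {B : Matrix (Fin n) (Fin n) ℝ} (hB : ∀ i j, 0 ≤ B i j) (j : Fin n) :
    phi K B j ≤ colsum B j :=
  Finset.sum_le_sum_of_subset_of_nonneg (Finset.filter_subset _ _)
    (fun i _ _ => hB i j)

lemma psi_le_colsum {R : ℕ} {B : Matrix (Fin n) (Fin n) ℝ} (hB : ∀ i j, 0 ≤ B i j) (j : Fin n) :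
    psi R B j ≤ colsum B j :=
  Finset.sum_le_sum_of_subset_of_nonneg (Finset.filter_subset _ _)
    (fun i _ _ => hB i j)

lemma captured_nonneg {K R : ℕ} {A : Fin m → Matrix (Fin n) (Fin n) ℝ}
    (hA : ∀ ℓ, ∀ i j, 0 ≤ A ℓ i j) (j : Fin n) : 0 ≤ captured K R A j := by
  rw [captured]
  rcases chosen K R A j with _ | a
  · simp
  · simpa using colsum_nonneg (hA a) j

lemma credit_le_two_captured {K R : ℕ} {A : Fin m → Matrix (Fin n) (Fin n) ℝ}
    (hA : ∀ ℓ, ∀ i j, 0 ≤ A ℓ i j) (j : Fin n) :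
    creditP K R A j + creditQ K R A j ≤ 2 * captured K R A j := by
  rw [creditP, creditQ, captured, chosen]
  rcases hP : pickP K R A j with _ | a <;> rcases hQ : pickQ K R A j with _ | b <;>
    simp only [Option.elim_none, Option.elim_some]
  · simp
  · have h1 := psi_le_colsum (R := R) (hA b) j
    have h2 := psi_nonneg (R := R) (hA b) j
    nlinarith [colsum_nonneg (hA b) j]
  · have h1 := phi_le_colsum (K := K) (hA a) j
    nlinarith [phi_nonneg (K := K) (hA a) j]
  · split
    · rename_i hle
      simp only [Option.elim_some]
      have h1 := phi_le_colsum (K := K) (hA a) j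
      nlinarith [phi_nonneg (K := K) (hA a) j, psi_nonneg (R := R) (hA b) j]
    · rename_i hlt
      push_neg at hlt
      simp only [Option.elim_some]
      have h1 := psi_le_colsum (R := R) (hA b) j
      nlinarith [psi_nonneg (R := R) (hA b) j]

end Stmt14X

namespace Stmt14X

lemma shift_hits {R : ℕ} (hR : 0 < R) (a l : ℕ) (hl : l < R) :
    (a + (l + R - a % R) % R) % R = l := by
  have ham : a % R < R := Nat.mod_lt _ hR
  rw [Nat.add_mod, Nat.mod_mod_of_dvd, Nat.add_mod_mod]
  · have : a % R + (l + R - a % R) = l + R := by omega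
    rw [this, Nat.add_mod_right, Nat.mod_eq_of_lt hl]
  · exact dvd_refl R

lemma shift_unique {R : ℕ} {a t t' : ℕ} (ht : t < R) (ht' : t' < R)
    (h : (a + t) % R = (a + t') % R) : t = t' := by
  have h2 : t ≡ t' [MOD R] := Nat.ModEq.add_left_cancel' _ h
  rw [Nat.ModEq, Nat.mod_eq_of_lt ht, Nat.mod_eq_of_lt ht'] at h2
  exact h2

lemma sum_ite_shift {R : ℕ} (hR : 0 < R) (a l : ℕ) (hl : l < R) (c : ℝ) :
    ∑ t ∈ Finset.range R, (if l = (a + t) % R then c else 0) = c := by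
  set t0 := (l + R - a % R) % R with ht0
  have ht0R : t0 ∈ Finset.range R := Finset.mem_range.2 (Nat.mod_lt _ hR)
  rw [Finset.sum_eq_single_of_mem t0 ht0R]
  · rw [if_pos (shift_hits hR a l hl).symm]
  · intro t htm hne
    rw [if_neg]
    intro hEq
    exact hne (shift_unique (Finset.mem_range.1 htm) (Nat.mod_lt _ hR)
      (hEq.symm.trans (shift_hits hR a l hl).symm))

lemma orth {K R : ℕ} (hRK : R ≤ K) (hR : 0 < R) (hK : 0 < K) {a b : ℕ}
    (h1 : a % K = b % K) (h2 : a / R = b / R) : a = b := by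
  have e1 := Nat.div_add_mod a K
  have e2 := Nat.div_add_mod b K
  have e3 := Nat.div_add_mod a R
  have e4 := Nat.div_add_mod b R
  have m1 : a % R < R := Nat.mod_lt _ hR
  have m2 : b % R < R := Nat.mod_lt _ hR
  rw [h1] at e1
  rw [h2] at e3
  rcases lt_trichotomy (a / K) (b / K) with h | h | h
  · have hkey : a + K ≤ b := by
      have h5 : K * (a / K + 1) ≤ K * (b / K) := Nat.mul_le_mul_left K (Nat.succ_le_of_lt h)
      rw [Nat.mul_add, Nat.mul_one] at h5
      omega
    omega
  · rw [h] at e1; omega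
  · have hkey : b + K ≤ a := by
      have h5 : K * (b / K + 1) ≤ K * (a / K) := Nat.mul_le_mul_left K (Nat.succ_le_of_lt h)
      rw [Nat.mul_add, Nat.mul_one] at h5
      omega
    omega

end Stmt14X

namespace Stmt14X

variable {n m : ℕ}

lemma sum_creditP_class {K R : ℕ} {A : Fin m → Matrix (Fin n) (Fin n) ℝ}
    (hmR : m ≤ R) (u : ℕ) :
    ∑ j ∈ univ.filter (fun j : Fin n => (j : ℕ) % K = u), creditP K R A j
      = Pval K R A u (tP K R A u) := by
  rw [Pval]
  simp only [Finset.sum_filter]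
  rw [Finset.sum_comm]
  apply Finset.sum_congr rfl
  intro j _
  by_cases hju : (j : ℕ) % K = u
  · rw [if_pos hju]
    subst hju
    rcases hp : pickP K R A j with _ | a
    · rw [creditP, hp, Option.elim_none]
      symm
      apply Finset.sum_eq_zero
      intro ℓ _
      rw [if_neg]
      rintro ⟨-, hc⟩
      have : PJob K R A j ℓ := hc.symm
      rw [pickP_eq_some hmR this] at hp
      exact absurd hp (by simp)
    · have hPa : PJob K R A j a := pickP_spec hp
      rw [creditP, hp, Option.elim_some]
      rw [Finset.sum_eq_single_of_mem a (Finset.mem_univ a)]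
      · rw [if_pos ⟨rfl, hPa.symm⟩]
      · intro ℓ _ hne
        rw [if_neg]
        rintro ⟨-, hc⟩
        exact hne (pjob_unique hmR (show PJob K R A j ℓ from hc.symm) hPa)
  · rw [if_neg hju]
    symm
    apply Finset.sum_eq_zero
    intro ℓ _
    rw [if_neg]
    rintro ⟨h, -⟩
    exact hju h

lemma sum_creditQ_class {K R : ℕ} {A : Fin m → Matrix (Fin n) (Fin n) ℝ}
    (hmR : m ≤ R) (v : ℕ) :
    ∑ j ∈ univ.filter (fun j : Fin n => (j : ℕ) / R = v), creditQ K R A j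
      = Qval K R A v (tQ K R A v) := by
  rw [Qval]
  simp only [Finset.sum_filter]
  rw [Finset.sum_comm]
  apply Finset.sum_congr rfl
  intro j _
  by_cases hjv : (j : ℕ) / R = v
  · rw [if_pos hjv]
    subst hjv
    rcases hp : pickQ K R A j with _ | a
    · rw [creditQ, hp, Option.elim_none]
      symm
      apply Finset.sum_eq_zero
      intro ℓ _
      rw [if_neg]
      rintro ⟨-, hc⟩
      have : QJob K R A j ℓ := hc.symm
      rw [pickQ_eq_some hmR this] at hp
      exact absurd hp (by simp)
    · have hPa : QJob K R A j a := pickQ_spec hp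
      rw [creditQ, hp, Option.elim_some]
      rw [Finset.sum_eq_single_of_mem a (Finset.mem_univ a)]
      · rw [if_pos ⟨rfl, hPa.symm⟩]
      · intro ℓ _ hne
        rw [if_neg]
        rintro ⟨-, hc⟩
        exact hne (qjob_unique hmR (show QJob K R A j ℓ from hc.symm) hPa)
  · rw [if_neg hjv]
    symm
    apply Finset.sum_eq_zero
    intro ℓ _
    rw [if_neg]
    rintro ⟨h, -⟩
    exact hjv h

lemma sum_Pval_shifts {K R : ℕ} {A : Fin m → Matrix (Fin n) (Fin n) ℝ}
    (hR : 0 < R) (hK : 0 < K) (hKR : n ≤ K * R) (u : ℕ) :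
    ∑ t ∈ Finset.range R, Pval K R A u t
      = ∑ ℓ : Fin m, ∑ j ∈ univ.filter (fun j : Fin n => (j : ℕ) % K = u), phi K (A ℓ) j := by
  simp only [Pval]
  rw [Finset.sum_comm]
  apply Finset.sum_congr rfl
  intro ℓ _
  simp only [Finset.sum_filter]
  rw [Finset.sum_comm]
  apply Finset.sum_congr rfl
  intro j _
  by_cases hju : (j : ℕ) % K = u
  · rw [if_pos hju]
    have hjK : (j : ℕ) / K < R := by
      rw [Nat.div_lt_iff_lt_mul hK]
      calc (j : ℕ) < n := j.isLt
        _ ≤ K * R := hKR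
        _ = R * K := Nat.mul_comm _ _
    calc ∑ t ∈ Finset.range R,
          (if (j : ℕ) % K = u ∧ (j : ℕ) / K = ((ℓ : ℕ) + t) % R then phi K (A ℓ) j else 0)
        = ∑ t ∈ Finset.range R,
          (if (j : ℕ) / K = ((ℓ : ℕ) + t) % R then phi K (A ℓ) j else 0) := by
          apply Finset.sum_congr rfl
          intro t _
          simp only [hju, true_and]
      _ = phi K (A ℓ) j := sum_ite_shift hR (ℓ : ℕ) ((j : ℕ) / K) hjK _
  · rw [if_neg hju]
    apply Finset.sum_eq_zero
    intro t _
    rw [if_neg]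
    rintro ⟨h, -⟩
    exact hju h

lemma sum_Qval_shifts {K R : ℕ} {A : Fin m → Matrix (Fin n) (Fin n) ℝ}
    (hR : 0 < R) (v : ℕ) :
    ∑ t ∈ Finset.range R, Qval K R A v t
      = ∑ ℓ : Fin m, ∑ j ∈ univ.filter (fun j : Fin n => (j : ℕ) / R = v), psi R (A ℓ) j := by
  simp only [Qval]
  rw [Finset.sum_comm]
  apply Finset.sum_congr rfl
  intro ℓ _
  simp only [Finset.sum_filter]
  rw [Finset.sum_comm]
  apply Finset.sum_congr rfl
  intro j _
  by_cases hjv : (j : ℕ) / R = v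
  · rw [if_pos hjv]
    have hjR : (j : ℕ) % R < R := Nat.mod_lt _ hR
    calc ∑ t ∈ Finset.range R,
          (if (j : ℕ) / R = v ∧ (j : ℕ) % R = ((ℓ : ℕ) + t) % R then psi R (A ℓ) j else 0)
        = ∑ t ∈ Finset.range R,
          (if (j : ℕ) % R = ((ℓ : ℕ) + t) % R then psi R (A ℓ) j else 0) := by
          apply Finset.sum_congr rfl
          intro t _
          simp only [hjv, true_and]
      _ = psi R (A ℓ) j := sum_ite_shift hR (ℓ : ℕ) ((j : ℕ) % R) hjR _
  · rw [if_neg hjv]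
    apply Finset.sum_eq_zero
    intro t _
    rw [if_neg]
    rintro ⟨h, -⟩
    exact hjv h

end Stmt14X

namespace Stmt14X

variable {n m : ℕ}

lemma coverP {K R : ℕ} {A : Fin m → Matrix (Fin n) (Fin n) ℝ}
    (hmR : m ≤ R) (hR : 0 < R) (hK : 0 < K) (hKR : n ≤ K * R) :
    ∑ ℓ : Fin m, ∑ j : Fin n, phi K (A ℓ) j ≤ (R : ℝ) * ∑ j : Fin n, creditP K R A j := by
  have hfib : ∑ j : Fin n, creditP K R A j
      = ∑ u ∈ Finset.range K,
          ∑ j ∈ univ.filter (fun j : Fin n => (j : ℕ) % K = u), creditP K R A j :=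
    (Finset.sum_fiberwise_of_maps_to (fun j _ => Finset.mem_range.2 (Nat.mod_lt _ hK)) _).symm
  have hfib2 : ∑ ℓ : Fin m, ∑ j : Fin n, phi K (A ℓ) j
      = ∑ u ∈ Finset.range K, ∑ t ∈ Finset.range R, Pval K R A u t := by
    have h1 : ∀ ℓ : Fin m, ∑ j : Fin n, phi K (A ℓ) j
        = ∑ u ∈ Finset.range K,
            ∑ j ∈ univ.filter (fun j : Fin n => (j : ℕ) % K = u), phi K (A ℓ) j :=
      fun ℓ =>
        (Finset.sum_fiberwise_of_maps_to (fun j _ => Finset.mem_range.2 (Nat.mod_lt _ hK)) _).symm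
    rw [Finset.sum_congr rfl fun ℓ _ => h1 ℓ, Finset.sum_comm]
    exact Finset.sum_congr rfl fun u _ => (sum_Pval_shifts hR hK hKR u).symm
  rw [hfib, hfib2, Finset.mul_sum]
  apply Finset.sum_le_sum
  intro u _
  rw [sum_creditP_class hmR u]
  calc ∑ t ∈ Finset.range R, Pval K R A u t
      ≤ (Finset.range R).card • Pval K R A u (tP K R A u) :=
        Finset.sum_le_card_nsmul _ _ _ (fun t ht => bestShift_spec R (Pval K R A u) hR t ht)
    _ = (R : ℝ) * Pval K R A u (tP K R A u) := by
        rw [Finset.card_range, nsmul_eq_mul]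

lemma coverQ {K R : ℕ} {A : Fin m → Matrix (Fin n) (Fin n) ℝ}
    (hmR : m ≤ R) (hR : 0 < R) (hK : 0 < K) (hKR : n ≤ K * R) :
    ∑ ℓ : Fin m, ∑ j : Fin n, psi R (A ℓ) j ≤ (R : ℝ) * ∑ j : Fin n, creditQ K R A j := by
  have hmaps : ∀ j : Fin n, (j : ℕ) / R ∈ Finset.range K := by
    intro j
    rw [Finset.mem_range, Nat.div_lt_iff_lt_mul hR]
    calc (j : ℕ) < n := j.isLt
      _ ≤ K * R := hKR
  have hfib : ∑ j : Fin n, creditQ K R A j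
      = ∑ v ∈ Finset.range K,
          ∑ j ∈ univ.filter (fun j : Fin n => (j : ℕ) / R = v), creditQ K R A j :=
    (Finset.sum_fiberwise_of_maps_to (fun j _ => hmaps j) _).symm
  have hfib2 : ∑ ℓ : Fin m, ∑ j : Fin n, psi R (A ℓ) j
      = ∑ v ∈ Finset.range K, ∑ t ∈ Finset.range R, Qval K R A v t := by
    have h1 : ∀ ℓ : Fin m, ∑ j : Fin n, psi R (A ℓ) j
        = ∑ v ∈ Finset.range K,
            ∑ j ∈ univ.filter (fun j : Fin n => (j : ℕ) / R = v), psi R (A ℓ) j :=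
      fun ℓ => (Finset.sum_fiberwise_of_maps_to (fun j _ => hmaps j) _).symm
    rw [Finset.sum_congr rfl fun ℓ _ => h1 ℓ, Finset.sum_comm]
    exact Finset.sum_congr rfl fun v _ => (sum_Qval_shifts hR v).symm
  rw [hfib, hfib2, Finset.mul_sum]
  apply Finset.sum_le_sum
  intro v _
  rw [sum_creditQ_class hmR v]
  calc ∑ t ∈ Finset.range R, Qval K R A v t
      ≤ (Finset.range R).card • Qval K R A v (tQ K R A v) :=
        Finset.sum_le_card_nsmul _ _ _ (fun t ht => bestShift_spec R (Qval K R A v) hR t ht)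
    _ = (R : ℝ) * Qval K R A v (tQ K R A v) := by
        rw [Finset.card_range, nsmul_eq_mul]

lemma colsum_le_phi_add_psi {K R : ℕ} (hRK : R ≤ K) (hR : 0 < R) (hK : 0 < K)
    {B : Matrix (Fin n) (Fin n) ℝ} (hB : IsValidMatrix B) (j : Fin n) :
    colsum B j ≤ phi K B j + psi R B j := by
  rw [colsum, phi, psi, Finset.sum_filter, Finset.sum_filter, ← Finset.sum_add_distrib]
  apply Finset.sum_le_sum
  intro i _
  by_cases hij : i = j
  · subst hij
    rw [hB.2 i]
    positivity
  · by_cases h1 : (i : ℕ) % K ≠ (j : ℕ) % K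
    · rw [if_pos h1]
      have h2 : (0:ℝ) ≤ if (i : ℕ) / R ≠ (j : ℕ) / R then B i j else 0 := by
        split
        · exact hB.1 i j
        · exact le_refl 0
      linarith
    · push_neg at h1
      have h2 : (i : ℕ) / R ≠ (j : ℕ) / R := by
        intro h3
        exact hij (Fin.ext (orth hRK hR hK h1 h3))
      rw [if_neg (by simpa using h1), if_pos h2]
      linarith [hB.1 i j]

end Stmt14X

namespace Stmt14X

variable {n m : ℕ}

lemma score_eq (B : Matrix (Fin n) (Fin n) ℝ) (S : Finset (Fin n)) :
    score B S = ∑ j ∈ S, colsum B j := by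
  rw [score]
  exact Finset.sum_comm

open scoped Classical in
lemma totalScore_mech {K R : ℕ} (A : Fin m → Matrix (Fin n) (Fin n) ℝ) :
    totalScore A (mech K R A) = ∑ j : Fin n, captured K R A j := by
  rw [totalScore]
  have h1 : ∀ ℓ : Fin m, score (A ℓ) (mech K R A ℓ)
      = ∑ j : Fin n, (if chosen K R A j = some ℓ then colsum (A ℓ) j else 0) := by
    intro ℓ
    rw [score_eq, mech, Finset.sum_filter]
  rw [Finset.sum_congr rfl fun ℓ _ => h1 ℓ, Finset.sum_comm]
  apply Finset.sum_congr rfl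
  intro j _
  rw [captured]
  rcases hc : chosen K R A j with _ | a
  · simp
  · rw [Option.elim_some]
    rw [Finset.sum_eq_single_of_mem a (Finset.mem_univ a)]
    · rw [if_pos rfl]
    · intro ℓ _ hne
      rw [if_neg]
      intro h
      exact hne (by injection h with h2; exact h2.symm ▸ rfl)

open scoped Classical in
lemma mech_card_le {K R : ℕ} (hR : 0 < R) (hK : 0 < K) (hKR : n ≤ K * R)
    (A : Fin m → Matrix (Fin n) (Fin n) ℝ) (ℓ : Fin m) :
    (mech K R A ℓ).card ≤ 2 * K := by
  have hsub : mech K R A ℓ ⊆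
      (univ.filter fun j : Fin n => PJob K R A j ℓ) ∪
        (univ.filter fun j : Fin n => QJob K R A j ℓ) := by
    intro j hj
    rw [mech, Finset.mem_filter] at hj
    rcases chosen_cases hj.2 with h | h
    · exact Finset.mem_union_left _ (Finset.mem_filter.2 ⟨Finset.mem_univ _, h⟩)
    · exact Finset.mem_union_right _ (Finset.mem_filter.2 ⟨Finset.mem_univ _, h⟩)
  have hcardP : (univ.filter fun j : Fin n => PJob K R A j ℓ).card ≤ K := by
    have : (univ.filter fun j : Fin n => PJob K R A j ℓ).card
        ≤ (Finset.range K).card := by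
      refine Finset.card_le_card_of_injOn (fun j : Fin n => (j : ℕ) % K) ?_ ?_
      · intro j _
        exact Finset.mem_range.2 (Nat.mod_lt _ hK)
      · intro j hj j' hj' hmod
        dsimp only at hmod
        have hP := (Finset.mem_filter.1 hj).2
        have hP' := (Finset.mem_filter.1 hj').2
        rw [PJob] at hP hP'
        rw [hmod] at hP
        have hdiv : (j : ℕ) / K = (j' : ℕ) / K := hP.symm.trans hP'
        have e1 := Nat.div_add_mod (j : ℕ) K
        have e2 := Nat.div_add_mod (j' : ℕ) K
        rw [hdiv, hmod] at e1
        exact Fin.ext (by omega)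
    simpa using this
  have hcardQ : (univ.filter fun j : Fin n => QJob K R A j ℓ).card ≤ K := by
    have : (univ.filter fun j : Fin n => QJob K R A j ℓ).card
        ≤ (Finset.range K).card := by
      refine Finset.card_le_card_of_injOn (fun j : Fin n => (j : ℕ) / R) ?_ ?_
      · intro j _
        simp only [Finset.mem_coe, Finset.mem_range]
        rw [Nat.div_lt_iff_lt_mul hR]
        calc (j : ℕ) < n := j.isLt
          _ ≤ K * R := hKR
      · intro j hj j' hj' hdiv
        dsimp only at hdiv
        have hP := (Finset.mem_filter.1 hj).2
        have hP' := (Finset.mem_filter.1 hj').2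
        rw [QJob] at hP hP'
        rw [hdiv] at hP
        have hmod : (j : ℕ) % R = (j' : ℕ) % R := hP.symm.trans hP'
        have e1 := Nat.div_add_mod (j : ℕ) R
        have e2 := Nat.div_add_mod (j' : ℕ) R
        rw [hdiv, hmod] at e1
        exact Fin.ext (by omega)
    simpa using this
  calc (mech K R A ℓ).card ≤ _ := Finset.card_le_card hsub
    _ ≤ _ := Finset.card_union_le _ _
    _ ≤ 2 * K := by omega

open scoped Classical in
lemma mech_disjoint {K R : ℕ} (A : Fin m → Matrix (Fin n) (Fin n) ℝ) {ℓ ℓ' : Fin m}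
    (hne : ℓ ≠ ℓ') : Disjoint (mech K R A ℓ) (mech K R A ℓ') := by
  rw [Finset.disjoint_left]
  intro j hj hj'
  rw [mech, Finset.mem_filter] at hj hj'
  apply hne
  have := hj.2.symm.trans hj'.2
  injection this

end Stmt14X

namespace Stmt14X

variable {n m : ℕ}

lemma phi_rows_eq {K : ℕ} {B B' : Matrix (Fin n) (Fin n) ℝ} {i : Fin n}
    (hrows : ∀ i', i' ≠ i → B i' = B' i') {j : Fin n} (hj : (j : ℕ) % K = (i : ℕ) % K) :
    phi K B j = phi K B' j := by
  rw [phi, phi]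
  apply Finset.sum_congr rfl
  intro i' hi'
  have hmem : (i' : ℕ) % K ≠ (j : ℕ) % K := (Finset.mem_filter.1 hi').2
  have hne : i' ≠ i := by
    intro h
    rw [h] at hmem
    exact hmem hj.symm
  rw [hrows i' hne]

lemma psi_rows_eq {R : ℕ} {B B' : Matrix (Fin n) (Fin n) ℝ} {i : Fin n}
    (hrows : ∀ i', i' ≠ i → B i' = B' i') {j : Fin n} (hj : (j : ℕ) / R = (i : ℕ) / R) :
    psi R B j = psi R B' j := by
  rw [psi, psi]
  apply Finset.sum_congr rfl
  intro i' hi'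
  have hmem : (i' : ℕ) / R ≠ (j : ℕ) / R := (Finset.mem_filter.1 hi').2
  have hne : i' ≠ i := by
    intro h
    rw [h] at hmem
    exact hmem hj.symm
  rw [hrows i' hne]

lemma tP_rows_eq {K R : ℕ} {A A' : Fin m → Matrix (Fin n) (Fin n) ℝ} {i : Fin n}
    (hrows : ∀ ℓ, ∀ i', i' ≠ i → A ℓ i' = A' ℓ i') :
    tP K R A ((i : ℕ) % K) = tP K R A' ((i : ℕ) % K) := by
  rw [tP, tP]
  congr 1
  funext t
  rw [Pval, Pval]
  apply Finset.sum_congr rfl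
  intro ℓ _
  apply Finset.sum_congr rfl
  intro j hj
  exact phi_rows_eq (hrows ℓ) (Finset.mem_filter.1 hj).2.1

lemma tQ_rows_eq {K R : ℕ} {A A' : Fin m → Matrix (Fin n) (Fin n) ℝ} {i : Fin n}
    (hrows : ∀ ℓ, ∀ i', i' ≠ i → A ℓ i' = A' ℓ i') :
    tQ K R A ((i : ℕ) / R) = tQ K R A' ((i : ℕ) / R) := by
  rw [tQ, tQ]
  congr 1
  funext t
  rw [Qval, Qval]
  apply Finset.sum_congr rfl
  intro ℓ _
  apply Finset.sum_congr rfl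
  intro j hj
  exact psi_rows_eq (hrows ℓ) (Finset.mem_filter.1 hj).2.1

lemma pickP_rows_eq {K R : ℕ} {A A' : Fin m → Matrix (Fin n) (Fin n) ℝ} {i : Fin n}
    (hrows : ∀ ℓ, ∀ i', i' ≠ i → A ℓ i' = A' ℓ i') :
    pickP K R A i = pickP K R A' i := by
  have hfilter : (univ.filter fun ℓ : Fin m => PJob K R A i ℓ)
      = (univ.filter fun ℓ : Fin m => PJob K R A' i ℓ) := by
    apply Finset.filter_congr
    intro ℓ _
    rw [PJob, PJob, tP_rows_eq hrows]
  rw [pickP, pickP, hfilter]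

lemma pickQ_rows_eq {K R : ℕ} {A A' : Fin m → Matrix (Fin n) (Fin n) ℝ} {i : Fin n}
    (hrows : ∀ ℓ, ∀ i', i' ≠ i → A ℓ i' = A' ℓ i') :
    pickQ K R A i = pickQ K R A' i := by
  have hfilter : (univ.filter fun ℓ : Fin m => QJob K R A i ℓ)
      = (univ.filter fun ℓ : Fin m => QJob K R A' i ℓ) := by
    apply Finset.filter_congr
    intro ℓ _
    rw [QJob, QJob, tQ_rows_eq hrows]
  rw [pickQ, pickQ, hfilter]

open scoped Classical in
lemma chosen_rows_eq {K R : ℕ} {A A' : Fin m → Matrix (Fin n) (Fin n) ℝ} {i : Fin n}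
    (hrows : ∀ ℓ, ∀ i', i' ≠ i → A ℓ i' = A' ℓ i') :
    chosen K R A i = chosen K R A' i := by
  rw [chosen, chosen, pickP_rows_eq hrows, pickQ_rows_eq hrows]
  rcases pickP K R A' i with _ | a
  · rfl
  · rcases pickQ K R A' i with _ | b
    · rfl
    · simp only [Option.elim_some]
      rw [phi_rows_eq (hrows a) rfl, psi_rows_eq (hrows b) rfl]

end Stmt14X

open Stmt14X in
/-- Deterministic impartial assignment with weights: for `1 < k < n`, `m·k ≤ n`
and `k - k % 2 ≥ 2√n`, there exists an impartial `(n,m,k)`-assignment mechanism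
that is `α`-optimal with `α = (k - k % 2) / (2k·⌈2n/(k - k % 2)⌉)`. -/
theorem stmt14 (n m k : ℕ) (h1 : 1 < k) (h2 : k < n) (hmk : m * k ≤ n)
    (h3 : 4 * n ≤ (k - k % 2) ^ 2) :
    ∃ f : (Fin m → Matrix (Fin n) (Fin n) ℝ) → (Fin m → Finset (Fin n)),
      (∀ A, FeasibleAssignment m k (f A)) ∧ ImpartialAssign f ∧
      AlphaOptimalAssign k f
        (((k - k % 2 : ℕ) : ℝ) /
          (2 * (k : ℝ) * ((⌈(2 * (n : ℝ)) / ((k - k % 2 : ℕ) : ℝ)⌉ : ℤ) : ℝ))) := by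
  classical
  set K := k / 2 with hKdef
  have hK : 0 < K := by omega
  have hq : k - k % 2 = 2 * K := by omega
  have h2K : 2 * K ≤ k := by omega
  have hn0 : 0 < n := by omega
  set R := (n + K - 1) / K with hRdef
  have hdm := Nat.div_add_mod (n + K - 1) K
  rw [← hRdef] at hdm
  have hmlt : (n + K - 1) % K < K := Nat.mod_lt _ hK
  have hKR : n ≤ K * R := by omega
  have hKR' : K * R ≤ n + K - 1 := by omega
  have hR : 0 < R := by
    rcases Nat.eq_zero_or_pos R with h | h
    · rw [h, Nat.mul_zero] at hKR; omega
    · exact h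
  have hnKK : n ≤ K * K := by
    have h4 : (k - k % 2) ^ 2 = 4 * (K * K) := by rw [hq]; ring
    omega
  have hRK : R ≤ K := by
    have hlt : n + K - 1 < (K + 1) * K := by
      have hexp : (K + 1) * K = K * K + K := by ring
      omega
    have := (Nat.div_lt_iff_lt_mul hK).2 hlt
    omega
  have hmR : m ≤ R := by
    have hstep : m * (2 * K) ≤ m * k := Nat.mul_le_mul_left m h2K
    have h2m : K * (2 * m) ≤ K * R := by
      calc K * (2 * m) = m * (2 * K) := by ring
        _ ≤ m * k := hstep
        _ ≤ n := hmk
        _ ≤ K * R := hKR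
    have := Nat.le_of_mul_le_mul_left h2m hK
    omega
  have hKpos : (0 : ℝ) < (K : ℝ) := by exact_mod_cast hK
  have hRpos : (0 : ℝ) < (R : ℝ) := by exact_mod_cast hR
  have hkpos : (0 : ℝ) < (k : ℝ) := by exact_mod_cast (show 0 < k by omega)
  have hcastq : ((k - k % 2 : ℕ) : ℝ) = 2 * (K : ℝ) := by
    rw [hq]; push_cast; ring
  have hceil : (⌈(2 * (n : ℝ)) / ((k - k % 2 : ℕ) : ℝ)⌉ : ℤ) = (R : ℤ) := by
    rw [hcastq]
    have hdiv : (2 * (n : ℝ)) / (2 * (K : ℝ)) = (n : ℝ) / (K : ℝ) :=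
      mul_div_mul_left _ _ two_ne_zero
    rw [hdiv, Int.ceil_eq_iff]
    constructor
    · rw [Int.cast_natCast, lt_div_iff₀ hKpos]
      have hcast1 : (K : ℝ) * (R : ℝ) + 1 ≤ (n : ℝ) + (K : ℝ) := by
        exact_mod_cast (show K * R + 1 ≤ n + K by omega)
      nlinarith
    · rw [Int.cast_natCast, div_le_iff₀ hKpos]
      have hcast2 : (n : ℝ) ≤ (K : ℝ) * (R : ℝ) := by exact_mod_cast hKR
      nlinarith
  refine ⟨Stmt14X.mech K R, ?_, ?_, ?_⟩
  · intro A
    constructor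
    · intro ℓ
      calc (mech K R A ℓ).card ≤ 2 * K := mech_card_le hR hK hKR A ℓ
        _ ≤ k := h2K
    · intro ℓ ℓ' hne
      exact mech_disjoint A hne
  · intro A A' _ _ i hrows ℓ
    have hci := chosen_rows_eq (K := K) (R := R) hrows
    simp only [mech, Finset.mem_filter, Finset.mem_univ, true_and]
    rw [hci]
  · intro A hval
    have hA : ∀ ℓ, ∀ i j, 0 ≤ A ℓ i j := fun ℓ => (hval ℓ).1
    set M := ∑ ℓ : Fin m, ∑ j : Fin n, colsum (A ℓ) j with hMdef
    have hM0 : 0 ≤ M := Finset.sum_nonneg fun ℓ _ =>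
      Finset.sum_nonneg fun j _ => colsum_nonneg (hA ℓ) j
    have hub : optAssign m k A ≤ M := by
      apply Real.sSup_le _ hM0
      rintro x ⟨X, hX, rfl⟩
      rw [totalScore]
      apply Finset.sum_le_sum
      intro ℓ _
      rw [score_eq]
      exact Finset.sum_le_sum_of_subset_of_nonneg (Finset.subset_univ _)
        (fun j _ _ => colsum_nonneg (hA ℓ) j)
    set V := totalScore A (mech K R A) with hVdef
    have hVcap : V = ∑ j : Fin n, captured K R A j := by
      rw [hVdef]; exact totalScore_mech A
    have hV0 : 0 ≤ V := by
      rw [hVcap]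
      exact Finset.sum_nonneg fun j _ => captured_nonneg hA j
    have hMV : M ≤ 2 * (R : ℝ) * V := by
      have s1 : M ≤ ∑ ℓ : Fin m, ∑ j : Fin n, (phi K (A ℓ) j + psi R (A ℓ) j) := by
        apply Finset.sum_le_sum
        intro ℓ _
        apply Finset.sum_le_sum
        intro j _
        exact colsum_le_phi_add_psi hRK hR hK (hval ℓ) j
      have s2 : ∑ ℓ : Fin m, ∑ j : Fin n, (phi K (A ℓ) j + psi R (A ℓ) j)
          = (∑ ℓ : Fin m, ∑ j : Fin n, phi K (A ℓ) j)
            + ∑ ℓ : Fin m, ∑ j : Fin n, psi R (A ℓ) j := by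
        rw [← Finset.sum_add_distrib]
        exact Finset.sum_congr rfl fun ℓ _ => Finset.sum_add_distrib
      have s3 := coverP (A := A) hmR hR hK hKR
      have s4 := coverQ (A := A) hmR hR hK hKR
      have s5 : (∑ j : Fin n, creditP K R A j) + ∑ j : Fin n, creditQ K R A j
          ≤ 2 * ∑ j : Fin n, captured K R A j := by
        rw [← Finset.sum_add_distrib, Finset.mul_sum]
        exact Finset.sum_le_sum fun j _ => credit_le_two_captured hA j
      rw [hVcap]
      calc M ≤ _ := s1
        _ = _ := s2
        _ ≤ (R : ℝ) * (∑ j : Fin n, creditP K R A j)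
            + (R : ℝ) * ∑ j : Fin n, creditQ K R A j := add_le_add s3 s4
        _ = (R : ℝ) * ((∑ j : Fin n, creditP K R A j) + ∑ j : Fin n, creditQ K R A j) := by
            ring
        _ ≤ (R : ℝ) * (2 * ∑ j : Fin n, captured K R A j) :=
            mul_le_mul_of_nonneg_left s5 hRpos.le
        _ = 2 * (R : ℝ) * ∑ j : Fin n, captured K R A j := by ring
    rw [hceil, hcastq, Int.cast_natCast]
    have hden : (0 : ℝ) < 2 * (k : ℝ) * (R : ℝ) := by positivity
    have hann : 0 ≤ 2 * (K : ℝ) / (2 * (k : ℝ) * (R : ℝ)) := by positivity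
    have hc : 2 * (K : ℝ) ≤ (k : ℝ) := by exact_mod_cast h2K
    calc 2 * (K : ℝ) / (2 * (k : ℝ) * (R : ℝ)) * optAssign m k A
        ≤ 2 * (K : ℝ) / (2 * (k : ℝ) * (R : ℝ)) * M := mul_le_mul_of_nonneg_left hub hann
      _ ≤ V := by
          rw [div_mul_eq_mul_div, div_le_iff₀ hden]
          have t1 : 2 * (K : ℝ) * M ≤ 2 * (K : ℝ) * (2 * (R : ℝ) * V) :=
            mul_le_mul_of_nonneg_left hMV (by positivity)
          nlinarith [mul_nonneg (mul_nonneg (sub_nonneg.2 hc) hRpos.le) hV0]
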